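/- arXiv:2310.02394 — 2 statements merged into one kernel-verified Lean document; each statement's English description precedes it below -/
import Mathlib

section
/- Let W and U be N×N row-stochastic matrices with B = W - U, and let α ∈ (0,1). Define the influence vectors v_W = (α/N)(I-(1-α)W')⁻¹𝟏 and v_U = (α/N)(I-(1-α)U')⁻¹𝟏. Then ‖v_U - v_W‖₁ ≤ (1-α)‖B‖_∞/α, where ‖B‖_∞ is the maximum absolute row sum of B. -/
open Matrix BigOperators

lemma stoch_contract {N : ℕ} (A : Matrix (Fin N) (Fin N) ℝ)
    (hnn : ∀ i j, 0 ≤ A i j) (hrow : ∀ i, ∑ j, A i j = 1) (x : Fin N → ℝ) :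
    ∑ i, |(Aᵀ *ᵥ x) i| ≤ ∑ i, |x i| := by
  calc ∑ i, |(Aᵀ *ᵥ x) i| ≤ ∑ i, ∑ j, A j i * |x j| := by
        refine Finset.sum_le_sum fun i _ => ?_
        simp only [Matrix.mulVec, dotProduct, Matrix.transpose_apply]
        refine (Finset.abs_sum_le_sum_abs _ _).trans (le_of_eq ?_)
        exact Finset.sum_congr rfl fun j _ => by
          rw [abs_mul, abs_of_nonneg (hnn j i)]
    _ = ∑ j, |x j| := by
        rw [Finset.sum_comm]
        refine Finset.sum_congr rfl fun j _ => ?_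
        rw [← Finset.sum_mul, hrow j, one_mul]

lemma norm_lb {N : ℕ} (α : ℝ) (hα1 : α < 1) (A : Matrix (Fin N) (Fin N) ℝ)
    (hnn : ∀ i j, 0 ≤ A i j) (hrow : ∀ i, ∑ j, A i j = 1) (x : Fin N → ℝ) :
    α * ∑ i, |x i| ≤ ∑ i, |((1 - (1 - α) • Aᵀ) *ᵥ x) i| := by
  have hx : ∀ i, x i = ((1 - (1 - α) • Aᵀ) *ᵥ x) i + (1 - α) * (Aᵀ *ᵥ x) i := by
    intro i
    simp [Matrix.sub_mulVec, Matrix.smul_mulVec, Matrix.one_mulVec]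
  have h1 : ∑ i, |x i| ≤ (∑ i, |((1 - (1 - α) • Aᵀ) *ᵥ x) i|)
      + (1 - α) * ∑ i, |(Aᵀ *ᵥ x) i| := by
    calc ∑ i, |x i| ≤ ∑ i, (|((1 - (1 - α) • Aᵀ) *ᵥ x) i| + (1 - α) * |(Aᵀ *ᵥ x) i|) := by
          refine Finset.sum_le_sum fun i _ => ?_
          rw [hx i]
          refine (abs_add_le _ _).trans ?_
          rw [abs_mul, abs_of_nonneg (by linarith : (0:ℝ) ≤ 1 - α)]
      _ = _ := by rw [Finset.sum_add_distrib, Finset.mul_sum]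
  have h2 := stoch_contract A hnn hrow x
  nlinarith [h2]

lemma isUnit_M {N : ℕ} (α : ℝ) (hα0 : 0 < α) (hα1 : α < 1) (A : Matrix (Fin N) (Fin N) ℝ)
    (hnn : ∀ i j, 0 ≤ A i j) (hrow : ∀ i, ∑ j, A i j = 1) :
    IsUnit (1 - (1 - α) • Aᵀ) := by
  rw [← Matrix.mulVec_injective_iff_isUnit]
  intro x y hxy
  have h : (1 - (1 - α) • Aᵀ) *ᵥ (x - y) = 0 := by
    rw [Matrix.mulVec_sub, hxy, sub_self]
  have hb := norm_lb α hα1 A hnn hrow (x - y)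
  rw [h] at hb
  simp only [Pi.zero_apply, abs_zero, Finset.sum_const_zero] at hb
  have hs : ∑ i, |(x - y) i| = 0 := by
    have : (0:ℝ) ≤ ∑ i, |(x - y) i| := Finset.sum_nonneg fun i _ => abs_nonneg _
    nlinarith
  have hall := (Finset.sum_eq_zero_iff_of_nonneg (fun i _ => abs_nonneg _)).mp hs
  funext i
  have := hall i (Finset.mem_univ i)
  have : x i - y i = 0 := abs_eq_zero.mp this
  linarith

/-- The influence vector of an input-output matrix `W` with labor share `α`. -/
noncomputable def influence {N : ℕ} (α : ℝ) (W : Matrix (Fin N) (Fin N) ℝ) : Fin N → ℝ :=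
  (α / (N : ℝ)) • ((1 - (1 - α) • Wᵀ)⁻¹ *ᵥ fun _ => 1)

/-- Ipsen–Wills perturbation bound: `‖v_U - v_W‖₁ ≤ (1-α)‖B‖_∞ / α` where
`B = W - U` and `‖B‖_∞` is the maximum absolute row sum of `B`. -/
theorem influence_perturbation_bound (N : ℕ) [NeZero N] (α : ℝ) (hα0 : 0 < α) (hα1 : α < 1)
    (W U : Matrix (Fin N) (Fin N) ℝ)
    (hWnn : ∀ i j, 0 ≤ W i j) (hWrow : ∀ i, ∑ j, W i j = 1)
    (hUnn : ∀ i j, 0 ≤ U i j) (hUrow : ∀ i, ∑ j, U i j = 1) :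
    ∑ i, |influence α U i - influence α W i| ≤
      (1 - α) * (Finset.univ.sup' Finset.univ_nonempty fun i => ∑ j, |(W - U) i j|) / α := by
  have hβ0 : (0:ℝ) < 1 - α := by linarith
  have hN : (0:ℝ) < (N : ℝ) := by
    exact_mod_cast Nat.pos_of_ne_zero (NeZero.ne N)
  set MW : Matrix (Fin N) (Fin N) ℝ := 1 - (1 - α) • Wᵀ with hMWdef
  set MU : Matrix (Fin N) (Fin N) ℝ := 1 - (1 - α) • Uᵀ with hMUdef
  have hMW : IsUnit MW := isUnit_M α hα0 hα1 W hWnn hWrow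
  have hMU : IsUnit MU := isUnit_M α hα0 hα1 U hUnn hUrow
  set ones : Fin N → ℝ := fun _ => 1 with hones
  set xW : Fin N → ℝ := MW⁻¹ *ᵥ ones with hxW
  set xU : Fin N → ℝ := MU⁻¹ *ᵥ ones with hxU
  have hMWx : MW *ᵥ xW = ones := by
    rw [hxW, Matrix.mulVec_mulVec, Matrix.mul_nonsing_inv _ ((Matrix.isUnit_iff_isUnit_det _).mp hMW),
      Matrix.one_mulVec]
  have hMUx : MU *ᵥ xU = ones := by
    rw [hxU, Matrix.mulVec_mulVec, Matrix.mul_nonsing_inv _ ((Matrix.isUnit_iff_isUnit_det _).mp hMU),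
      Matrix.one_mulVec]
  -- key resolvent identity
  have key : MU *ᵥ (xU - xW) = (1 - α) • ((Uᵀ - Wᵀ) *ᵥ xW) := by
    have e1 : MU = MW - (1 - α) • (Uᵀ - Wᵀ) := by
      rw [hMWdef, hMUdef, smul_sub]; abel
    rw [Matrix.mulVec_sub, hMUx]
    rw [e1, Matrix.sub_mulVec, hMWx, Matrix.smul_mulVec]
    abel
  set K : ℝ := Finset.univ.sup' Finset.univ_nonempty fun i => ∑ j, |(W - U) i j| with hK
  have hK0 : 0 ≤ K := by
    obtain ⟨i0, hi0⟩ := (Finset.univ_nonempty : (Finset.univ : Finset (Fin N)).Nonempty)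
    refine le_trans ?_ (Finset.le_sup' _ hi0)
    exact Finset.sum_nonneg fun j _ => abs_nonneg _
  set D : ℝ := ∑ i, |(xU - xW) i| with hD
  set S : ℝ := ∑ i, |xW i| with hS
  set T : ℝ := ∑ i, |((Uᵀ - Wᵀ) *ᵥ xW) i| with hT
  have hDnn : 0 ≤ D := Finset.sum_nonneg fun i _ => abs_nonneg _
  have hSnn : 0 ≤ S := Finset.sum_nonneg fun i _ => abs_nonneg _
  -- α D ≤ (1-α) T
  have hd : α * D ≤ (1 - α) * T := by
    have := norm_lb α hα1 U hUnn hUrow (xU - xW)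
    rw [← hMUdef, key] at this
    calc α * D ≤ ∑ i, |((1 - α) • ((Uᵀ - Wᵀ) *ᵥ xW)) i| := this
      _ = (1 - α) * T := by
          rw [hT, Finset.mul_sum]
          refine Finset.sum_congr rfl fun i _ => ?_
          simp only [Pi.smul_apply, smul_eq_mul, abs_mul, abs_of_nonneg hβ0.le]
  -- T ≤ K * S
  have hB : T ≤ K * S := by
    calc T ≤ ∑ i, ∑ j, |(W - U) j i| * |xW j| := by
          refine Finset.sum_le_sum fun i _ => ?_
          simp only [Matrix.mulVec, dotProduct, Matrix.transpose_apply,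
            Matrix.sub_apply]
          refine (Finset.abs_sum_le_sum_abs _ _).trans (le_of_eq ?_)
          refine Finset.sum_congr rfl fun j _ => ?_
          rw [abs_mul, abs_sub_comm]
      _ = ∑ j, (∑ i, |(W - U) j i|) * |xW j| := by
          rw [Finset.sum_comm]
          exact Finset.sum_congr rfl fun j _ => (Finset.sum_mul _ _ _).symm
      _ ≤ ∑ j, K * |xW j| := by
          refine Finset.sum_le_sum fun j _ => ?_
          exact mul_le_mul_of_nonneg_right (Finset.le_sup' (fun i => ∑ j, |(W - U) i j|) (Finset.mem_univ j)) (abs_nonneg _)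
      _ = K * S := by rw [hS, Finset.mul_sum]
  -- α S ≤ N
  have hxWb : α * S ≤ (N : ℝ) := by
    have := norm_lb α hα1 W hWnn hWrow xW
    rw [← hMWdef, hMWx] at this
    simpa [hones, Finset.card_univ] using this
  -- rewrite LHS
  have hinfl : ∑ i, |influence α U i - influence α W i| = (α / N) * D := by
    rw [hD, Finset.mul_sum]
    refine Finset.sum_congr rfl fun i _ => ?_
    have : influence α U i - influence α W i = (α / N) * (xU i - xW i) := by
      simp only [influence, Pi.smul_apply, smul_eq_mul, hxU, hxW, hMUdef, hMWdef, hones]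
      ring
    rw [this, Pi.sub_apply, abs_mul, abs_of_nonneg (by positivity : (0:ℝ) ≤ α / N)]
  rw [hinfl]
  have t1 : α * D ≤ (1 - α) * (K * S) :=
    hd.trans (mul_le_mul_of_nonneg_left hB hβ0.le)
  have t2 : α * (α * D) ≤ (1 - α) * K * (N : ℝ) := by
    calc α * (α * D) ≤ α * ((1 - α) * (K * S)) :=
          mul_le_mul_of_nonneg_left t1 hα0.le
      _ = (1 - α) * K * (α * S) := by ring
      _ ≤ (1 - α) * K * (N : ℝ) :=
          mul_le_mul_of_nonneg_left hxWb (by positivity)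
  have : (α / N) * D = α * D / N := by ring
  rw [this, div_le_div_iff₀ hN hα0]
  nlinarith [t2]
end

section
/- Suppose W and U are n×n row-stochastic matrices such that for each i there exist d_i ≤ δ and nonnegative numbers c_{ij} ≤ w_{ij} with ∑_j c_{ij} = d_i and u_{ij} = (w_{ij} - c_{ij})/(1 - d_i). Then every row of B = W - U satisfies ∑_j |u_{ij} - w_{ij}| ≤ (2δ - δ²)/(1-δ), i.e., ‖B‖_∞ ≤ (2δ - δ²)/(1-δ). -/
open Matrix BigOperators

/-- If a `d i ≤ δ` share of each row of the row-stochastic matrix `W` is deleted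
(`c i j` being the deleted share from column `j`) and the rows are renormalized to
give `U`, then every absolute row sum of `W - U` is at most `(2δ - δ²)/(1-δ)`. -/
theorem row_sum_perturbation_bound (n : ℕ) (δ : ℝ) (hδ0 : 0 ≤ δ) (hδ1 : δ < 1)
    (W U : Matrix (Fin n) (Fin n) ℝ) (c : Fin n → Fin n → ℝ) (d : Fin n → ℝ)
    (hWnn : ∀ i j, 0 ≤ W i j) (hWrow : ∀ i, ∑ j, W i j = 1)
    (hd : ∀ i, d i ≤ δ)
    (hc0 : ∀ i j, 0 ≤ c i j) (hcw : ∀ i j, c i j ≤ W i j)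
    (hcd : ∀ i, ∑ j, c i j = d i)
    (hU : ∀ i j, U i j = (W i j - c i j) / (1 - d i)) :
    ∀ i, ∑ j, |U i j - W i j| ≤ (2 * δ - δ ^ 2) / (1 - δ) := by
  intro i
  have hd0 : 0 ≤ d i := by
    rw [← hcd i]; exact Finset.sum_nonneg fun j _ => hc0 i j
  have hdδ : d i ≤ δ := hd i
  have hd1 : d i < 1 := lt_of_le_of_lt hdδ hδ1
  have h1d : 0 < 1 - d i := by linarith
  have h1δ : 0 < 1 - δ := by linarith
  have key : ∀ j, |U i j - W i j| ≤ (d i * W i j + (1 - d i) * c i j) / (1 - d i) := by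
    intro j
    have hUij : U i j - W i j = (d i * W i j - c i j) / (1 - d i) := by
      rw [hU i j]; field_simp; ring
    rw [hUij, abs_div, abs_of_pos h1d]
    apply div_le_div_of_nonneg_right _ h1d.le
    rw [abs_le]
    constructor
    · nlinarith [hcw i j, hc0 i j, hWnn i j]
    · nlinarith [hcw i j, hc0 i j, hWnn i j]
  calc ∑ j, |U i j - W i j| ≤ ∑ j, (d i * W i j + (1 - d i) * c i j) / (1 - d i) :=
        Finset.sum_le_sum fun j _ => key j
    _ = (2 * d i - d i ^ 2) / (1 - d i) := by
        rw [← Finset.sum_div]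
        congr 1
        rw [Finset.sum_add_distrib, ← Finset.mul_sum, ← Finset.mul_sum, hWrow i, hcd i]
        ring
    _ ≤ (2 * δ - δ ^ 2) / (1 - δ) := by
        rw [div_le_div_iff₀ h1d h1δ]
        nlinarith [mul_nonneg (sub_nonneg.mpr hdδ) (mul_pos h1d h1δ).le]
end
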